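/- For every r > 0 there exists a constant C > 0 (depending on n, s₀, r, T and the coefficients a^{jk}) such that for all t ∈ [0,T] and all x with 0 < |x| ≤ r the composition ϕ∘σ, where ϕ(s) = φ(s)/(s·φ'(s)) = e^{s}, satisfies |Δₓ ( ϕ(σ(x,t)) )| ≤ C / w(x,t), where Δₓ denotes the spatial Laplacian. -/

import Mathlib

open Set

/- The radial weight profile: `F s = ∫₀^s (e^{-u} - 1)/u du` (integrand extended
continuously by `-1` at `u = 0`), and `φ s = s · exp (F s)`. -/

noncomputable def Fwt (s : ℝ) : ℝ :=
  ∫ u in (0:ℝ)..s, if u = 0 then (-1 : ℝ) else (Real.exp (-u) - 1) / u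

noncomputable def phiw (s : ℝ) : ℝ := s * Real.exp (Fwt s)

/-- `σ(x,t)`: the distance from `x` to the origin in the metric `(a^{jk}(t,0))`. -/
noncomputable def sigw {n : ℕ} (a : Fin n → Fin n → ℝ → EuclideanSpace ℝ (Fin n) → ℝ)
    (x : EuclideanSpace ℝ (Fin n)) (t : ℝ) : ℝ :=
  Real.sqrt (∑ j, ∑ k, a j k t 0 * x j * x k)

/-- The Carleman weight `w(x,t) = φ(σ(x,t))`. -/
noncomputable def ww {n : ℕ} (a : Fin n → Fin n → ℝ → EuclideanSpace ℝ (Fin n) → ℝ)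
    (x : EuclideanSpace ℝ (Fin n)) (t : ℝ) : ℝ :=
  phiw (sigw a x t)

/-- Partial derivative in the `i`-th coordinate direction. -/
noncomputable def pd {n : ℕ} (f : EuclideanSpace ℝ (Fin n) → ℝ) (i : Fin n)
    (x : EuclideanSpace ℝ (Fin n)) : ℝ :=
  fderiv ℝ f x (EuclideanSpace.single i 1)

/-- `ℓ(t,x) = -λ ln w(x,t)`. -/
noncomputable def lw {n : ℕ} (a : Fin n → Fin n → ℝ → EuclideanSpace ℝ (Fin n) → ℝ)
    (lam t : ℝ) (x : EuclideanSpace ℝ (Fin n)) : ℝ :=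
  -lam * Real.log (ww a x t)

/-- `Ψ = 2 Σ_{j,k} (a^{jk} ℓ_{x_j})_{x_k}`. -/
noncomputable def Psiw {n : ℕ} (a : Fin n → Fin n → ℝ → EuclideanSpace ℝ (Fin n) → ℝ)
    (lam t : ℝ) (x : EuclideanSpace ℝ (Fin n)) : ℝ :=
  2 * ∑ j, ∑ k, pd (fun y => a j k t y * pd (lw a lam t) j y) k x

/-- `𝒜 = -Σ_{j,k} [a^{jk} ℓ_{x_j} ℓ_{x_k} + (a^{jk} ℓ_{x_j})_{x_k}] - ℓ_t`. -/
noncomputable def Aw {n : ℕ} (a : Fin n → Fin n → ℝ → EuclideanSpace ℝ (Fin n) → ℝ)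
    (lam t : ℝ) (x : EuclideanSpace ℝ (Fin n)) : ℝ :=
  -(∑ j, ∑ k, (a j k t x * pd (lw a lam t) j x * pd (lw a lam t) k x
      + pd (fun y => a j k t y * pd (lw a lam t) j y) k x))
    - deriv (fun s => lw a lam s x) t

/-- `c^{jk} = Σ_{j',k'}[2 a^{jk'}(a^{j'k} ℓ_{x_{j'}})_{x_{k'}} - (a^{jk} a^{j'k'} ℓ_{x_{j'}})_{x_{k'}}]
  - (1/2) ∂ₜ a^{jk} + Ψ a^{jk}`. -/
noncomputable def cw {n : ℕ} (a : Fin n → Fin n → ℝ → EuclideanSpace ℝ (Fin n) → ℝ)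
    (lam t : ℝ) (j k : Fin n) (x : EuclideanSpace ℝ (Fin n)) : ℝ :=
  (∑ j', ∑ k', (2 * a j k' t x * pd (fun y => a j' k t y * pd (lw a lam t) j' y) k' x
      - pd (fun y => a j k t y * a j' k' t y * pd (lw a lam t) j' y) k' x))
    - deriv (fun s => a j k s x) t / 2 + Psiw a lam t x * a j k t x

/-- `ℬ = 2[𝒜 Ψ - Σ_{j,k} (𝒜 a^{jk} ℓ_{x_j})_{x_k}] - ∂ₜ 𝒜 - Σ_{j,k} (a^{jk} Ψ_{x_k})_{x_j}`. -/
noncomputable def Bw {n : ℕ} (a : Fin n → Fin n → ℝ → EuclideanSpace ℝ (Fin n) → ℝ)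
    (lam t : ℝ) (x : EuclideanSpace ℝ (Fin n)) : ℝ :=
  2 * (Aw a lam t x * Psiw a lam t x
      - ∑ j, ∑ k, pd (fun y => Aw a lam t y * a j k t y * pd (lw a lam t) j y) k x)
    - deriv (fun s => Aw a lam s x) t
    - ∑ j, ∑ k, pd (fun y => a j k t y * pd (Psiw a lam t) k y) j x

/-- The spatial Laplacian. -/
noncomputable def lapl {n : ℕ} (f : EuclideanSpace ℝ (Fin n) → ℝ)
    (x : EuclideanSpace ℝ (Fin n)) : ℝ :=
  ∑ i, fderiv ℝ (fun y => fderiv ℝ f y (EuclideanSpace.single i 1)) x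
    (EuclideanSpace.single i 1)


section AuxStmt7
open Real

variable {n : ℕ}

noncomputable def Qc (c : Fin n → Fin n → ℝ) (y : EuclideanSpace ℝ (Fin n)) : ℝ :=
  ∑ j, ∑ k, c j k * y j * y k

noncomputable def Lc (c : Fin n → Fin n → ℝ) (x : EuclideanSpace ℝ (Fin n)) :
    EuclideanSpace ℝ (Fin n) →L[ℝ] ℝ :=
  ∑ j, ∑ k, c j k • ((x k) • (EuclideanSpace.proj j : EuclideanSpace ℝ (Fin n) →L[ℝ] ℝ)
    + (x j) • (EuclideanSpace.proj k : EuclideanSpace ℝ (Fin n) →L[ℝ] ℝ))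

lemma hasFDerivAt_coord (i : Fin n) (x : EuclideanSpace ℝ (Fin n)) :
    HasFDerivAt (fun y : EuclideanSpace ℝ (Fin n) => y i)
      (EuclideanSpace.proj i : EuclideanSpace ℝ (Fin n) →L[ℝ] ℝ) x :=
  (EuclideanSpace.proj i : EuclideanSpace ℝ (Fin n) →L[ℝ] ℝ).hasFDerivAt

lemma hasFDerivAt_Qc (c : Fin n → Fin n → ℝ) (x : EuclideanSpace ℝ (Fin n)) :
    HasFDerivAt (Qc c) (Lc c x) x := by
  have : HasFDerivAt (Qc c)
      (∑ j, ∑ k, c j k • ((x j) • (EuclideanSpace.proj k : EuclideanSpace ℝ (Fin n) →L[ℝ] ℝ)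
        + (x k) • (EuclideanSpace.proj j : EuclideanSpace ℝ (Fin n) →L[ℝ] ℝ))) x := by
    apply HasFDerivAt.fun_sum; intro j _
    apply HasFDerivAt.fun_sum; intro k _
    have := (((hasFDerivAt_coord j x).mul (hasFDerivAt_coord k x)).const_mul (c j k))
    refine this.congr_of_eventuallyEq (Filter.Eventually.of_forall fun y => ?_)
    simp only [Pi.mul_apply]; ring
  convert this using 1
  unfold Lc
  congr 1; ext j k
  simp [add_comm]

lemma Lc_apply_single (c : Fin n → Fin n → ℝ) (hsym : ∀ j k, c j k = c k j)
    (x : EuclideanSpace ℝ (Fin n)) (i : Fin n) :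
    Lc c x (EuclideanSpace.single i 1) = 2 * ∑ k, c i k * x k := by
  simp only [Lc, ContinuousLinearMap.sum_apply, ContinuousLinearMap.smul_apply,
    ContinuousLinearMap.add_apply, PiLp.proj_apply, EuclideanSpace.single_apply,
    smul_eq_mul, mul_add, mul_ite, mul_one, mul_zero, Finset.sum_add_distrib,
    Finset.sum_ite_eq', Finset.sum_ite_eq, Finset.mem_univ, if_true]
  rw [Finset.sum_comm]
  simp only [Finset.sum_ite_eq, Finset.sum_ite_eq', Finset.mem_univ, if_true]
  have : ∀ k, c k i * x k = c i k * x k := fun k => by rw [hsym k i]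
  simp only [this]
  ring

noncomputable def hcf (c : Fin n → Fin n → ℝ) (i : Fin n) (y : EuclideanSpace ℝ (Fin n)) : ℝ :=
  ∑ k, c i k * y k

lemma hasFDerivAt_sqrtQ (c : Fin n → Fin n → ℝ) {y : EuclideanSpace ℝ (Fin n)}
    (hy : Qc c y ≠ 0) :
    HasFDerivAt (fun z => Real.sqrt (Qc c z)) ((1 / (2 * Real.sqrt (Qc c y))) • Lc c y) y :=
  (Real.hasDerivAt_sqrt hy).comp_hasFDerivAt y (hasFDerivAt_Qc c y)

lemma hasFDerivAt_expsqrtQ (c : Fin n → Fin n → ℝ) {y : EuclideanSpace ℝ (Fin n)}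
    (hy : Qc c y ≠ 0) :
    HasFDerivAt (fun z => Real.exp (Real.sqrt (Qc c z)))
      (Real.exp (Real.sqrt (Qc c y)) • ((1 / (2 * Real.sqrt (Qc c y))) • Lc c y)) y :=
  (Real.hasDerivAt_exp _).comp_hasFDerivAt y (hasFDerivAt_sqrtQ c hy)

lemma fderiv_expsqrtQ_single (c : Fin n → Fin n → ℝ) (hsym : ∀ j k, c j k = c k j)
    {y : EuclideanSpace ℝ (Fin n)} (hy : 0 < Qc c y) (i : Fin n) :
    fderiv ℝ (fun z => Real.exp (Real.sqrt (Qc c z))) y (EuclideanSpace.single i 1)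
      = Real.exp (Real.sqrt (Qc c y)) * (hcf c i y / Real.sqrt (Qc c y)) := by
  rw [(hasFDerivAt_expsqrtQ c hy.ne').fderiv]
  have hs : Real.sqrt (Qc c y) ≠ 0 := by positivity
  simp only [ContinuousLinearMap.smul_apply, smul_eq_mul, Lc_apply_single c hsym, hcf]
  field_simp

lemma hasFDerivAt_hcf (c : Fin n → Fin n → ℝ) (i : Fin n) (x : EuclideanSpace ℝ (Fin n)) :
    HasFDerivAt (hcf c i)
      (∑ k, c i k • (EuclideanSpace.proj k : EuclideanSpace ℝ (Fin n) →L[ℝ] ℝ)) x := by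
  apply HasFDerivAt.fun_sum; intro k _
  exact (hasFDerivAt_coord k x).const_mul (c i k)

lemma second_partial (c : Fin n → Fin n → ℝ) (hsym : ∀ j k, c j k = c k j)
    (hpos : ∀ y : EuclideanSpace ℝ (Fin n), y ≠ 0 → 0 < Qc c y)
    {x : EuclideanSpace ℝ (Fin n)} (hx : x ≠ 0) (i : Fin n) :
    fderiv ℝ (fun y => fderiv ℝ (fun z => Real.exp (Real.sqrt (Qc c z))) y
        (EuclideanSpace.single i 1)) x (EuclideanSpace.single i 1)
      = Real.exp (Real.sqrt (Qc c x)) * ((hcf c i x) ^ 2 / (Qc c x)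
          + c i i / Real.sqrt (Qc c x) - (hcf c i x) ^ 2 / (Qc c x * Real.sqrt (Qc c x))) := by
  have hqx := hpos x hx
  have hsx : Real.sqrt (Qc c x) ≠ 0 := by positivity
  -- the function equals G i on a neighborhood of x
  have hev : (fun y => fderiv ℝ (fun z => Real.exp (Real.sqrt (Qc c z))) y
      (EuclideanSpace.single i 1)) =ᶠ[nhds x]
      (fun y => Real.exp (Real.sqrt (Qc c y)) * (hcf c i y * (Real.sqrt (Qc c y))⁻¹)) := by
    filter_upwards [IsOpen.mem_nhds isOpen_compl_singleton hx] with y hy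
    rw [fderiv_expsqrtQ_single c hsym (hpos y hy) i, div_eq_mul_inv]
  rw [hev.fderiv_eq]
  have hC : HasFDerivAt (fun z => (Real.sqrt (Qc c z))⁻¹)
      ((-((Real.sqrt (Qc c x)) ^ 2)⁻¹) • ((1 / (2 * Real.sqrt (Qc c x))) • Lc c x)) x :=
    (hasDerivAt_inv hsx).comp_hasFDerivAt x (hasFDerivAt_sqrtQ c hqx.ne')
  have hG := (hasFDerivAt_expsqrtQ c hqx.ne').mul ((hasFDerivAt_hcf c i x).mul hC)
  have hG' : HasFDerivAt (fun y => Real.exp (Real.sqrt (Qc c y)) * (hcf c i y * (Real.sqrt (Qc c y))⁻¹)) _ x := hG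
  rw [hG'.fderiv]
  have hL := Lc_apply_single c hsym x i
  have hB : (∑ k, c i k • (EuclideanSpace.proj k : EuclideanSpace ℝ (Fin n) →L[ℝ] ℝ))
      (EuclideanSpace.single i 1) = c i i := by
    simp [ContinuousLinearMap.sum_apply, PiLp.proj_apply, EuclideanSpace.single_apply,
      mul_ite, mul_one, mul_zero, Finset.sum_ite_eq, Finset.sum_ite_eq']
  simp only [ContinuousLinearMap.add_apply, ContinuousLinearMap.smul_apply, smul_eq_mul,
    hB, hL, Pi.mul_apply]
  have hsq : Real.sqrt (Qc c x) ^ 2 = Qc c x := Real.sq_sqrt hqx.le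
  rw [show (∑ k, c i k * x k) = hcf c i x from rfl, ← hsq]
  generalize hgen : Real.sqrt (Qc c x) = s at hsx ⊢
  have hs0 : 0 ≤ s := hgen ▸ Real.sqrt_nonneg _
  rw [Real.sqrt_sq hs0]
  field_simp
  ring

lemma real_bound (N M s₀ r h Q cii X : ℝ) (hN : 1 ≤ N) (hM : 1 ≤ M) (hs₀ : 0 < s₀)
    (hr : 0 < r) (hX : 0 < X) (hXr : X ≤ r)
    (hQl : s₀ * X ^ 2 ≤ Q) (hQu : Q ≤ N ^ 2 * M * X ^ 2)
    (hh : |h| ≤ N * M * X) (hcii : |cii| ≤ M) :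
    |Real.exp (Real.sqrt Q) * (h ^ 2 / Q + cii / Real.sqrt Q - h ^ 2 / (Q * Real.sqrt Q))|
      ≤ Real.exp (N * Real.sqrt M * r)
        * (N ^ 2 * M ^ 2 * r / s₀ + M / Real.sqrt s₀ + N ^ 2 * M ^ 2 / (s₀ * Real.sqrt s₀)) / X := by
  set s := Real.sqrt Q with hs
  have hQpos : 0 < Q := lt_of_lt_of_le (by positivity) hQl
  have hspos : 0 < s := Real.sqrt_pos.2 hQpos
  have hβ : Real.sqrt s₀ * X ≤ s := by
    have : Real.sqrt (s₀ * X ^ 2) ≤ s := Real.sqrt_le_sqrt hQl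
    rwa [Real.sqrt_mul hs₀.le, Real.sqrt_sq hX.le] at this
  have hsu : s ≤ N * Real.sqrt M * r := by
    have h1 : Real.sqrt Q ≤ Real.sqrt (N ^ 2 * M * X ^ 2) := Real.sqrt_le_sqrt hQu
    have h2 : Real.sqrt (N ^ 2 * M * X ^ 2) = N * Real.sqrt M * X := by
      rw [Real.sqrt_mul (by positivity), Real.sqrt_mul (by positivity),
        Real.sqrt_sq (by linarith), Real.sqrt_sq hX.le]
    have h3 : N * Real.sqrt M * X ≤ N * Real.sqrt M * r := by
      have : (0:ℝ) ≤ N * Real.sqrt M := by positivity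
      nlinarith
    calc s ≤ _ := h1
      _ = _ := h2
      _ ≤ _ := h3
  have hh2 : h ^ 2 ≤ (N * M * X) ^ 2 := by nlinarith [abs_nonneg h, sq_abs h]
  have hβ0 : (0:ℝ) < Real.sqrt s₀ := Real.sqrt_pos.2 hs₀
  -- three pieces
  have ha : h ^ 2 / Q ≤ N ^ 2 * M ^ 2 * r / s₀ / X := by
    rw [div_le_div_iff₀ hQpos hX]
    calc h ^ 2 * X ≤ (N * M * X) ^ 2 * X := by nlinarith [hX.le]
      _ = N ^ 2 * M ^ 2 * X ^ 2 * X := by ring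
      _ ≤ N ^ 2 * M ^ 2 * X ^ 2 * r := by nlinarith [sq_nonneg (N*M*X)]
      _ = N ^ 2 * M ^ 2 * r / s₀ * (s₀ * X ^ 2) := by field_simp
      _ ≤ N ^ 2 * M ^ 2 * r / s₀ * Q := by
          apply mul_le_mul_of_nonneg_left hQl; positivity
  have hb : cii / s ≤ M / Real.sqrt s₀ / X ∧ -(cii / s) ≤ M / Real.sqrt s₀ / X := by
    constructor
    · rw [div_le_div_iff₀ hspos hX]
      calc cii * X ≤ M * X := by nlinarith [le_abs_self cii]
        _ = M / Real.sqrt s₀ * (Real.sqrt s₀ * X) := by field_simp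
        _ ≤ M / Real.sqrt s₀ * s := by
            apply mul_le_mul_of_nonneg_left hβ; positivity
    · rw [← neg_div, div_le_div_iff₀ hspos hX]
      calc -cii * X ≤ M * X := by nlinarith [neg_abs_le cii]
        _ = M / Real.sqrt s₀ * (Real.sqrt s₀ * X) := by field_simp
        _ ≤ M / Real.sqrt s₀ * s := by
            apply mul_le_mul_of_nonneg_left hβ; positivity
  have hc : h ^ 2 / (Q * s) ≤ N ^ 2 * M ^ 2 / (s₀ * Real.sqrt s₀) / X := by
    rw [div_le_div_iff₀ (by positivity) hX]
    have hQs : s₀ * X ^ 2 * (Real.sqrt s₀ * X) ≤ Q * s := by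
      apply mul_le_mul hQl hβ (by positivity) hQpos.le
    calc h ^ 2 * X ≤ N ^ 2 * M ^ 2 * X ^ 2 * X := by nlinarith [hX.le]
      _ = N ^ 2 * M ^ 2 / (s₀ * Real.sqrt s₀) * (s₀ * X ^ 2 * (Real.sqrt s₀ * X)) := by
          field_simp
      _ ≤ N ^ 2 * M ^ 2 / (s₀ * Real.sqrt s₀) * (Q * s) := by
          apply mul_le_mul_of_nonneg_left hQs; positivity
  -- combine
  have hA0 : 0 ≤ h ^ 2 / Q := by positivity
  have hC0 : 0 ≤ h ^ 2 / (Q * s) := by positivity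
  have ha10 : 0 ≤ N ^ 2 * M ^ 2 * r / s₀ / X := by positivity
  have ha30 : 0 ≤ N ^ 2 * M ^ 2 / (s₀ * Real.sqrt s₀) / X := by positivity
  have habs : |h ^ 2 / Q + cii / s - h ^ 2 / (Q * s)|
      ≤ N ^ 2 * M ^ 2 * r / s₀ / X + M / Real.sqrt s₀ / X
        + N ^ 2 * M ^ 2 / (s₀ * Real.sqrt s₀) / X := by
    rw [abs_le]
    constructor
    · linarith [hb.2]
    · linarith [hb.1]
  rw [abs_mul, Real.abs_exp, mul_div_assoc, add_div, add_div]
  exact mul_le_mul (Real.exp_le_exp.2 hsu) habs (abs_nonneg _) (Real.exp_pos _).le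

lemma coord_le_norm (x : EuclideanSpace ℝ (Fin n)) (j : Fin n) : |x j| ≤ ‖x‖ := by
  rw [EuclideanSpace.norm_eq]
  have : |x j| = Real.sqrt (‖x j‖ ^ 2) := by
    rw [Real.sqrt_sq_eq_abs]; simp
  rw [this]
  apply Real.sqrt_le_sqrt
  exact Finset.single_le_sum (f := fun k => ‖x k‖ ^ 2) (fun k _ => by positivity)
    (Finset.mem_univ j)

lemma Qc_upper (c : Fin n → Fin n → ℝ) (M : ℝ) (hMc : ∀ j k, |c j k| ≤ M)
    (x : EuclideanSpace ℝ (Fin n)) : Qc c x ≤ (n : ℝ) ^ 2 * M * ‖x‖ ^ 2 := by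
  have : Qc c x ≤ ∑ j : Fin n, ∑ k : Fin n, M * ‖x‖ ^ 2 := by
    apply Finset.sum_le_sum; intro j _
    apply Finset.sum_le_sum; intro k _
    calc c j k * x j * x k ≤ |c j k * x j * x k| := le_abs_self _
      _ = |c j k| * |x j| * |x k| := by rw [abs_mul, abs_mul]
      _ ≤ M * ‖x‖ * ‖x‖ := by
          have h1 := coord_le_norm x j
          have h2 := coord_le_norm x k
          have h3 := hMc j k
          have h4 := abs_nonneg (c j k)
          have h5 := abs_nonneg (x j)
          have h6 := abs_nonneg (x k)
          have hM0 : 0 ≤ M := h4.trans h3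
          have h7 := (abs_nonneg (x j)).trans h1
          exact mul_le_mul (mul_le_mul h3 h1 h5 hM0) h2 h6 (by positivity)
      _ = M * ‖x‖ ^ 2 := by ring
  simpa [Finset.sum_const, Finset.card_univ] using this.trans (le_of_eq (by
    simp [Finset.sum_const, Finset.card_univ]; ring))

lemma hcf_le (c : Fin n → Fin n → ℝ) (M : ℝ) (hM : 0 ≤ M) (hMc : ∀ j k, |c j k| ≤ M)
    (i : Fin n) (x : EuclideanSpace ℝ (Fin n)) : |hcf c i x| ≤ (n : ℝ) * M * ‖x‖ := by
  calc |hcf c i x| ≤ ∑ k : Fin n, |c i k * x k| := Finset.abs_sum_le_sum_abs _ _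
    _ ≤ ∑ k : Fin n, M * ‖x‖ := by
        apply Finset.sum_le_sum; intro k _
        rw [abs_mul]
        exact mul_le_mul (hMc i k) (coord_le_norm x k) (abs_nonneg _) hM
    _ = (n : ℝ) * M * ‖x‖ := by
        simp [Finset.sum_const, Finset.card_univ]; ring


lemma Fwt_nonpos {s : ℝ} (hs : 0 ≤ s) : Fwt s ≤ 0 := by
  have : 0 ≤ -Fwt s := by
    rw [Fwt, ← intervalIntegral.integral_neg]
    apply intervalIntegral.integral_nonneg hs
    intro u hu
    by_cases h : u = 0
    · simp [h]
    · have hu0 : 0 < u := lt_of_le_of_ne hu.1 (Ne.symm h)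
      simp only [h, if_false]
      rw [← neg_div]
      apply div_nonneg _ hu0.le
      rw [neg_sub, sub_nonneg]
      calc Real.exp (-u) ≤ Real.exp 0 := Real.exp_le_exp.2 (by linarith)
        _ = 1 := Real.exp_zero
  linarith


lemma sqrtQ_le (N M X Q : ℝ) (hN : 0 ≤ N) (hM : 0 ≤ M) (hX : 0 ≤ X)
    (hQu : Q ≤ N ^ 2 * M * X ^ 2) : Real.sqrt Q ≤ N * Real.sqrt M * X := by
  calc Real.sqrt Q ≤ Real.sqrt (N ^ 2 * M * X ^ 2) := Real.sqrt_le_sqrt hQu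
    _ = N * Real.sqrt M * X := by
        rw [Real.sqrt_mul (by positivity), Real.sqrt_mul (by positivity),
          Real.sqrt_sq hN, Real.sqrt_sq hX]

end AuxStmt7

theorem stmt_7
    (n : ℕ) (hn : 1 ≤ n) (T s₀ : ℝ) (hT : 0 < T) (hs₀ : 0 < s₀)
    (a : Fin n → Fin n → ℝ → EuclideanSpace ℝ (Fin n) → ℝ)
    (ha_smooth : ∀ j k, ContDiff ℝ 2 fun p : ℝ × EuclideanSpace ℝ (Fin n) => a j k p.1 p.2)
    (ha_symm : ∀ j k t x, a j k t x = a k j t x)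
    (ha_ell : ∀ t ∈ Icc (0:ℝ) T, ∀ x ξ : EuclideanSpace ℝ (Fin n),
      s₀ * ‖ξ‖ ^ 2 ≤ ∑ j, ∑ k, a j k t x * ξ j * ξ k) :
    ∀ r : ℝ, 0 < r → ∃ C : ℝ, 0 < C ∧ ∀ t ∈ Icc (0:ℝ) T,
      ∀ x : EuclideanSpace ℝ (Fin n), 0 < ‖x‖ → ‖x‖ ≤ r →
        |lapl (fun y => Real.exp (sigw a y t)) x| ≤ C / ww a x t := by
  intro r hr
  -- a uniform bound on the coefficients at x = 0
  obtain ⟨M, hM1, hMb⟩ : ∃ M : ℝ, 1 ≤ M ∧ ∀ t ∈ Icc (0:ℝ) T, ∀ j k, |a j k t 0| ≤ M := by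
    have hcont : ContinuousOn (fun t : ℝ => ∑ j, ∑ k, |a j k t 0|) (Icc 0 T) := by
      apply Continuous.continuousOn
      apply continuous_finset_sum; intro j _
      apply continuous_finset_sum; intro k _
      exact ((ha_smooth j k).continuous.comp
        (continuous_id.prodMk continuous_const)).abs
    obtain ⟨B, hB⟩ := (isCompact_Icc).exists_bound_of_continuousOn hcont
    refine ⟨max B 1, le_max_right _ _, fun t ht j k => ?_⟩
    have h1 : |a j k t 0| ≤ ∑ j', ∑ k', |a j' k' t 0| := by
      calc |a j k t 0| ≤ ∑ k', |a j k' t 0| :=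
            Finset.single_le_sum (f := fun k' => |a j k' t 0|)
              (fun _ _ => abs_nonneg _) (Finset.mem_univ k)
        _ ≤ ∑ j', ∑ k', |a j' k' t 0| :=
            Finset.single_le_sum (f := fun j' => ∑ k', |a j' k' t 0|)
              (fun _ _ => Finset.sum_nonneg fun _ _ => abs_nonneg _) (Finset.mem_univ j)
    have h2 := hB t ht
    rw [Real.norm_eq_abs] at h2
    calc |a j k t 0| ≤ _ := h1
      _ ≤ abs (∑ j', ∑ k', |a j' k' t 0|) := le_abs_self _
      _ ≤ B := h2
      _ ≤ max B 1 := le_max_left _ _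
  set N := (n : ℝ) with hNdef
  have hN : 1 ≤ N := by rw [hNdef]; exact_mod_cast hn
  have hM0 : 0 < M := lt_of_lt_of_le one_pos hM1
  set β := Real.sqrt s₀ with hβdef
  have hβ0 : 0 < β := Real.sqrt_pos.2 hs₀
  set E := Real.exp (N * Real.sqrt M * r) with hEdef
  set K := E * (N ^ 2 * M ^ 2 * r / s₀ + M / β + N ^ 2 * M ^ 2 / (s₀ * β)) with hKdef
  have hK0 : 0 < K := by
    have hE0 : 0 < E := Real.exp_pos _
    have : 0 < M / β := by positivity
    have h1 : 0 ≤ N ^ 2 * M ^ 2 * r / s₀ := by positivity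
    have h2 : 0 ≤ N ^ 2 * M ^ 2 / (s₀ * β) := by positivity
    have := mul_pos hE0 (by linarith : (0:ℝ) < N ^ 2 * M ^ 2 * r / s₀ + M / β
      + N ^ 2 * M ^ 2 / (s₀ * β))
    exact this
  refine ⟨N ^ 2 * Real.sqrt M * K, by positivity, fun t ht x hx0 hxr => ?_⟩
  set c : Fin n → Fin n → ℝ := fun j k => a j k t 0 with hcdef
  have hsym : ∀ j k, c j k = c k j := fun j k => ha_symm j k t 0
  have hpos : ∀ y : EuclideanSpace ℝ (Fin n), y ≠ 0 → 0 < Qc c y := by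
    intro y hy
    have h1 := ha_ell t ht 0 y
    have h2 : 0 < ‖y‖ := norm_pos_iff.2 hy
    calc (0:ℝ) < s₀ * ‖y‖ ^ 2 := by positivity
      _ ≤ _ := h1
      _ = Qc c y := rfl
  have hxne : x ≠ 0 := norm_pos_iff.1 hx0
  have hMc : ∀ j k, |c j k| ≤ M := fun j k => hMb t ht j k
  -- identify the function
  have hfun : (fun y => Real.exp (sigw a y t))
      = (fun z => Real.exp (Real.sqrt (Qc c z))) := rfl
  have hQl : s₀ * ‖x‖ ^ 2 ≤ Qc c x := ha_ell t ht 0 x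
  have hQu : Qc c x ≤ N ^ 2 * M * ‖x‖ ^ 2 := Qc_upper c M hMc x
  -- bound each second partial and sum up
  have hlap : |lapl (fun y => Real.exp (sigw a y t)) x| ≤ N * (K / ‖x‖) := by
    rw [hfun, lapl]
    calc |∑ i, fderiv ℝ (fun y => fderiv ℝ (fun z => Real.exp (Real.sqrt (Qc c z))) y
          (EuclideanSpace.single i 1)) x (EuclideanSpace.single i 1)|
        ≤ ∑ i : Fin n, |fderiv ℝ (fun y => fderiv ℝ (fun z => Real.exp (Real.sqrt (Qc c z))) y
          (EuclideanSpace.single i 1)) x (EuclideanSpace.single i 1)| :=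
          Finset.abs_sum_le_sum_abs _ _
      _ ≤ ∑ _i : Fin n, K / ‖x‖ := by
          apply Finset.sum_le_sum; intro i _
          rw [second_partial c hsym hpos hxne i]
          have := real_bound N M s₀ r (hcf c i x) (Qc c x) (c i i) ‖x‖ hN hM1 hs₀ hr
            hx0 hxr hQl hQu (hcf_le c M (by linarith) hMc i x) (hMc i i)
          rw [hKdef, hEdef, hβdef]
          exact this
      _ = N * (K / ‖x‖) := by
          simp [Finset.sum_const, Finset.card_univ, hNdef]
  -- weight bounds
  have hqx : 0 < Qc c x := hpos x hxne
  have hσpos : 0 < sigw a x t := by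
    have : sigw a x t = Real.sqrt (Qc c x) := rfl
    rw [this]; positivity
  have hσle : sigw a x t ≤ N * Real.sqrt M * ‖x‖ := by
    have : sigw a x t = Real.sqrt (Qc c x) := rfl
    rw [this]
    exact sqrtQ_le N M ‖x‖ (Qc c x) (by linarith) (by linarith) hx0.le hQu
  have hwpos : 0 < ww a x t := by
    rw [ww, phiw]
    positivity
  have hwle : ww a x t ≤ N * Real.sqrt M * ‖x‖ := by
    rw [ww, phiw]
    calc sigw a x t * Real.exp (Fwt (sigw a x t)) ≤ sigw a x t * 1 := by
          apply mul_le_mul_of_nonneg_left _ hσpos.le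
          rw [← Real.exp_zero]
          exact Real.exp_le_exp.2 (Fwt_nonpos hσpos.le)
      _ = sigw a x t := mul_one _
      _ ≤ _ := hσle
  -- conclude
  refine hlap.trans ?_
  have heq : N * (K / ‖x‖) = N * K / ‖x‖ := by ring
  rw [heq, div_le_div_iff₀ hx0 hwpos]
  calc N * K * ww a x t ≤ N * K * (N * Real.sqrt M * ‖x‖) := by
        apply mul_le_mul_of_nonneg_left hwle
        positivity
    _ = N ^ 2 * Real.sqrt M * K * ‖x‖ := by ring
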